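/- Let Λ be an A-lattice of rank r in L and u ∈ K·Λ. Then there exists n ∈ ℕ such that the support of Z_{u,Λ} is contained in (1/n)·ℤ, and the Hahn series (1 − q^r·S)·Z_{u,Λ} has finite support; equivalently, Z_{u,Λ} is a rational function of S^{1/n} whose only denominator is 1 − q^r·S. -/

import Mathlib

open scoped Classical

noncomputable section

variable {Fq : Type*} [Field Fq] [Fintype Fq]
variable {L : Type*} [NormedField L] [CompleteSpace L]
variable [Algebra (Polynomial Fq) L]

/-- `log_q |z|`. -/
def logq (q : ℕ) (z : L) : ℝ := Real.logb q ‖z‖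

/-- An `A = 𝔽_q[T]`-lattice of rank `r` in `L`: a finitely generated `A`-submodule which is
free of rank `r` (equivalently: its `𝔽_q(T)`-span has dimension `r`), and which is
discrete in `L` (finite intersection with every bounded ball). -/
def IsLatticeOfRank (r : ℕ) (Λ : Submodule (Polynomial Fq) L) : Prop :=
  (∃ b : Fin r → L, LinearIndependent (Polynomial Fq) b ∧
      Submodule.span (Polynomial Fq) (Set.range b) = Λ) ∧
  ∀ B : ℝ, {x : L | x ∈ Λ ∧ ‖x‖ ≤ B}.Finite

/-- Membership in `K·Λ`, the `K = 𝔽_q(T)`-span of `Λ` in `L`. -/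
def InKSpan (Λ : Submodule (Polynomial Fq) L) (u : L) : Prop :=
  ∃ n : Polynomial Fq, n ≠ 0 ∧ n • u ∈ Λ

/-- The exponential function of the lattice `Λ`: `e^Λ(z) = z·∏_{0≠λ∈Λ} (1 - z/λ)`. -/
def latExp (Λ : Submodule (Polynomial Fq) L) (z : L) : L :=
  z * ∏' l : {x : L // x ∈ Λ ∧ x ≠ 0}, (1 - z / (l : L))

/-- The coefficient of `S^x` in the `Z`-function `Z_{u,Λ}`:
the number of `λ ∈ u + Λ`, `λ ≠ 0`, with `log λ = x`. -/
def zCoef (q : ℕ) (Λ : Submodule (Polynomial Fq) L) (u : L) (x : ℚ) : ℕ :=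
  Nat.card {l : L | l ≠ 0 ∧ l - u ∈ Λ ∧ logq q l = (x : ℝ)}

/-! ### Auxiliary lemmas -/

/-- Finiteness of balls in a coset of a lattice. -/
lemma cosetBall_finite {r : ℕ}
    (hna : ∀ x y : L, ‖x + y‖ ≤ max ‖x‖ ‖y‖)
    {Λ : Submodule (Polynomial Fq) L} (hΛ : IsLatticeOfRank r Λ) (u : L) (B : ℝ) :
    {l : L | l - u ∈ Λ ∧ ‖l‖ ≤ B}.Finite := by
  refine Set.Finite.of_finite_image (f := fun l => l - u) ((hΛ.2 (max B ‖u‖)).subset ?_) ?_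
  · rintro x ⟨l, ⟨h1, h2⟩, rfl⟩
    refine ⟨h1, ?_⟩
    calc ‖l - u‖ = ‖l + -u‖ := by rw [sub_eq_add_neg]
      _ ≤ max ‖l‖ ‖-u‖ := hna _ _
      _ ≤ max B ‖u‖ := by rw [norm_neg]; exact max_le_max h2 le_rfl
  · intro a _ b _ h
    exact sub_left_injective h

/-- Counting elements of a coset in a "ball" equals counting lattice elements there. -/
lemma card_coset_eq
    (hna : ∀ x y : L, ‖x + y‖ ≤ max ‖x‖ ‖y‖)
    (Λ : Submodule (Polynomial Fq) L) (u : L)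
    (P : ℝ → Prop) (hmono : ∀ s t : ℝ, s ≤ t → P t → P s) (hu : P ‖u‖) :
    Nat.card {l : L | l - u ∈ Λ ∧ P ‖l‖} = Nat.card {l : L | l ∈ Λ ∧ P ‖l‖} := by
  have key : ∀ a c : L, P ‖a‖ → P ‖c‖ → P ‖a + c‖ := by
    intro a c ha hc
    rcases max_cases ‖a‖ ‖c‖ with ⟨h1, _⟩ | ⟨h1, _⟩
    · exact hmono _ _ ((hna a c).trans h1.le) ha
    · exact hmono _ _ ((hna a c).trans h1.le) hc
  refine Nat.card_eq_of_bijective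
    (fun l => ⟨(l : L) - u, l.2.1, ?_⟩) ⟨?_, ?_⟩
  · have := key (l : L) (-u) l.2.2 (by rwa [norm_neg])
    rwa [← sub_eq_add_neg] at this
  · intro a c h
    have : (a : L) - u = (c : L) - u := congrArg Subtype.val h
    exact Subtype.ext (sub_left_injective this)
  · rintro ⟨y, hy1, hy2⟩
    refine ⟨⟨y + u, ?_, key y u hy2 hu⟩, ?_⟩
    · simpa using hy1
    · exact Subtype.ext (by simp)

/-- The key counting lemma: multiplying the radius by `q` multiplies the number of lattice
points by `q^r`, once the radius is at least the size of the generators. -/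
lemma card_ball_mul {q r : ℕ} (hq : Fintype.card Fq = q)
    (hna : ∀ x y : L, ‖x + y‖ ≤ max ‖x‖ ‖y‖)
    (hA : ∀ a : Polynomial Fq, a ≠ 0 →
      ‖algebraMap (Polynomial Fq) L a‖ = (q : ℝ) ^ a.natDegree)
    {Λ : Submodule (Polynomial Fq) L} {b : Fin r → L}
    (hb : LinearIndependent (Polynomial Fq) b)
    (hsp : Submodule.span (Polynomial Fq) (Set.range b) = Λ)
    {B₀ : ℝ} (hB₀ : 0 ≤ B₀) (hbB : ∀ i, ‖b i‖ ≤ B₀)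
    (P : ℝ → Prop) (hmono : ∀ s t : ℝ, s ≤ t → P t → P s) (hPB : P B₀) :
    Nat.card {l : L | l ∈ Λ ∧ P ‖l‖}
      = Nat.card {l : L | l ∈ Λ ∧ P ((q : ℝ) * ‖l‖)} * q ^ r := by
  classical
  haveI : IsUltrametricDist L :=
    IsUltrametricDist.isUltrametricDist_of_forall_norm_add_le_max_norm hna
  have hPmax : ∀ s t : ℝ, P s → P t → P (max s t) := by
    intro s t hs ht
    rcases max_cases s t with ⟨h1, _⟩ | ⟨h1, _⟩ <;> rw [h1] <;> assumption
  have hX : ∀ z : L, ‖(Polynomial.X : Polynomial Fq) • z‖ = (q : ℝ) * ‖z‖ := by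
    intro z
    rw [Algebra.smul_def, norm_mul, hA _ Polynomial.X_ne_zero, Polynomial.natDegree_X, pow_one]
  have hC : ∀ (c : Fq) (z : L), ‖(Polynomial.C c : Polynomial Fq) • z‖ ≤ ‖z‖ := by
    intro c z
    by_cases hc : c = 0
    · simp [hc, norm_nonneg]
    · rw [Algebra.smul_def, norm_mul, hA _ (Polynomial.C_ne_zero.mpr hc),
        Polynomial.natDegree_C, pow_zero, one_mul]
  have hbmem : ∀ i, b i ∈ Λ := fun i => hsp ▸ Submodule.subset_span ⟨i, rfl⟩
  have hνmem : ∀ c : Fin r → Fq, (∑ i, (Polynomial.C (c i) : Polynomial Fq) • b i) ∈ Λ :=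
    fun c => Submodule.sum_mem _ fun i _ => Submodule.smul_mem _ _ (hbmem i)
  have hνnorm : ∀ c : Fin r → Fq, ‖∑ i, (Polynomial.C (c i) : Polynomial Fq) • b i‖ ≤ B₀ :=
    fun c => IsUltrametricDist.norm_sum_le_of_forall_le_of_nonneg hB₀
      (fun i _ => (hC _ _).trans (hbB i))
  -- the bijection
  set S := {l : L | l ∈ Λ ∧ P ((q : ℝ) * ‖l‖)} with hSdef
  set T := {l : L | l ∈ Λ ∧ P ‖l‖} with hTdef
  have hf : ∀ (p : S × (Fin r → Fq)),
      ((Polynomial.X : Polynomial Fq) • (p.1 : L)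
        + ∑ i, (Polynomial.C (p.2 i) : Polynomial Fq) • b i) ∈ T := by
    rintro ⟨⟨μ, hμΛ, hμP⟩, c⟩
    refine ⟨Submodule.add_mem _ (Submodule.smul_mem _ _ hμΛ) (hνmem c), ?_⟩
    have h1 : ‖(Polynomial.X : Polynomial Fq) • μ
        + ∑ i, (Polynomial.C (c i) : Polynomial Fq) • b i‖ ≤ max ((q : ℝ) * ‖μ‖) B₀ := by
      refine (hna _ _).trans ?_
      rw [hX]
      exact max_le_max le_rfl (hνnorm c)
    exact hmono _ _ h1 (hPmax _ _ hμP hPB)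
  refine Eq.trans (b := Nat.card (S × (Fin r → Fq))) ?_ ?_
  · refine (Nat.card_eq_of_bijective (fun p => ⟨_, hf p⟩) ⟨?_, ?_⟩).symm
    · -- injectivity
      rintro ⟨⟨μ, hμΛ, hμP⟩, c⟩ ⟨⟨μ', hμΛ', hμP'⟩, c'⟩ h
      have h0 : (Polynomial.X : Polynomial Fq) • μ
          + ∑ i, (Polynomial.C (c i) : Polynomial Fq) • b i
          = (Polynomial.X : Polynomial Fq) • μ'
          + ∑ i, (Polynomial.C (c' i) : Polynomial Fq) • b i := congrArg Subtype.val h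
      obtain ⟨g, hg⟩ := (Submodule.mem_span_range_iff_exists_fun _).mp (hsp ▸ hμΛ :
        μ ∈ Submodule.span (Polynomial Fq) (Set.range b))
      obtain ⟨g', hg'⟩ := (Submodule.mem_span_range_iff_exists_fun _).mp (hsp ▸ hμΛ' :
        μ' ∈ Submodule.span (Polynomial Fq) (Set.range b))
      have expand : ∀ (g : Fin r → Polynomial Fq) (c : Fin r → Fq),
          (Polynomial.X : Polynomial Fq) • (∑ i, g i • b i)
            + ∑ i, (Polynomial.C (c i) : Polynomial Fq) • b i
          = ∑ i, ((Polynomial.X * g i + Polynomial.C (c i)) • b i) := by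
        intro g c
        rw [Finset.smul_sum, ← Finset.sum_add_distrib]
        refine Finset.sum_congr rfl fun i _ => ?_
        rw [smul_smul, ← add_smul]
      rw [← hg, ← hg', expand, expand] at h0
      have hcoeff : ∀ i, Polynomial.X * g i + Polynomial.C (c i)
          = Polynomial.X * g' i + Polynomial.C (c' i) := by
        have h1 : ∑ i, ((Polynomial.X * g i + Polynomial.C (c i))
            - (Polynomial.X * g' i + Polynomial.C (c' i))) • b i = 0 := by
          simp only [sub_smul]
          rw [Finset.sum_sub_distrib, h0, sub_self]
        intro i
        have := Fintype.linearIndependent_iff.mp hb _ h1 i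
        exact sub_eq_zero.mp this
      have hc : c = c' := by
        funext i
        have := congrArg (fun p => Polynomial.coeff p 0) (hcoeff i)
        simp only [Polynomial.coeff_add, Polynomial.mul_coeff_zero,
          Polynomial.coeff_X_zero, zero_mul, zero_add, Polynomial.coeff_C_zero] at this
        exact this
      have hgg : ∀ i, g i = g' i := by
        intro i
        have h2 := hcoeff i
        rw [hc] at h2
        have h3 : Polynomial.X * g i = Polynomial.X * g' i := by
          have := add_right_cancel h2
          exact this
        exact mul_left_cancel₀ Polynomial.X_ne_zero h3
      have hμ : μ = μ' := by
        rw [← hg, ← hg']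
        exact Finset.sum_congr rfl fun i _ => by rw [hgg i]
      subst hc
      simp only [Prod.mk.injEq, Subtype.mk.injEq]
      exact ⟨hμ, trivial⟩
    · -- surjectivity
      rintro ⟨y, hyΛ, hyP⟩
      obtain ⟨g, hg⟩ := (Submodule.mem_span_range_iff_exists_fun _).mp (hsp ▸ hyΛ :
        y ∈ Submodule.span (Polynomial Fq) (Set.range b))
      set c : Fin r → Fq := fun i => (g i).coeff 0 with hcdef
      set μ : L := ∑ i, (g i).divX • b i with hμdef
      have hμΛ : μ ∈ Λ := Submodule.sum_mem _ fun i _ => Submodule.smul_mem _ _ (hbmem i)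
      have heq : (Polynomial.X : Polynomial Fq) • μ
          + ∑ i, (Polynomial.C (c i) : Polynomial Fq) • b i = y := by
        rw [hμdef, Finset.smul_sum, ← Finset.sum_add_distrib, ← hg]
        refine Finset.sum_congr rfl fun i _ => ?_
        rw [smul_smul, ← add_smul, Polynomial.X_mul_divX_add]
      have hμP : P ((q : ℝ) * ‖μ‖) := by
        have h1 : (Polynomial.X : Polynomial Fq) • μ
            = y + -(∑ i, (Polynomial.C (c i) : Polynomial Fq) • b i) := by
          rw [← heq]; ring_nf
        have h2 : (q : ℝ) * ‖μ‖ ≤ max ‖y‖ B₀ := by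
          rw [← hX, h1]
          refine (hna _ _).trans ?_
          rw [norm_neg]
          exact max_le_max le_rfl (hνnorm c)
        exact hmono _ _ h2 (hPmax _ _ hyP hPB)
      exact ⟨⟨⟨μ, hμΛ, hμP⟩, c⟩, Subtype.ext heq⟩
  · rw [Nat.card_prod, Nat.card_eq_fintype_card (α := Fin r → Fq), Fintype.card_fun,
      hq, Fintype.card_fin]

theorem statement6
    (q : ℕ) (hq : Fintype.card Fq = q)
    (hna : ∀ x y : L, ‖x + y‖ ≤ max ‖x‖ ‖y‖)
    (hA : ∀ a : Polynomial Fq, a ≠ 0 →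
      ‖algebraMap (Polynomial Fq) L a‖ = (q : ℝ) ^ a.natDegree)
    (hval : ∀ x : L, x ≠ 0 → ∃ s : ℚ, ‖x‖ = (q : ℝ) ^ (s : ℝ))
    (r : ℕ)
    (Λ : Submodule (Polynomial Fq) L) (hΛ : IsLatticeOfRank r Λ)
    (u : L) (hu : InKSpan Λ u) :
    ∃ n : ℕ, 0 < n ∧
      (∀ x : ℚ, zCoef q Λ u x ≠ 0 → ∃ k : ℤ, x = (k : ℚ) / n) ∧
      {x : ℚ | (zCoef q Λ u x : ℤ) - (q : ℤ) ^ r * zCoef q Λ u (x - 1) ≠ 0}.Finite := by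
  classical
  obtain ⟨⟨b, hb, hsp⟩, hdisc⟩ := id hΛ
  have hq1 : (1 : ℝ) < q := by
    have h2 : 1 < Fintype.card Fq := Fintype.one_lt_card
    rw [hq] at h2
    exact_mod_cast h2
  have hq0 : (0 : ℝ) < q := lt_trans zero_lt_one hq1
  set B₀ : ℝ := 1 + ∑ i, ‖b i‖ with hB₀def
  have hB₀pos : 0 < B₀ := by
    have : (0:ℝ) ≤ ∑ i, ‖b i‖ := Finset.sum_nonneg fun i _ => norm_nonneg _
    rw [hB₀def]; linarith
  have hbB : ∀ i, ‖b i‖ ≤ B₀ := by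
    intro i
    have h1 : ‖b i‖ ≤ ∑ j, ‖b j‖ :=
      Finset.single_le_sum (fun j _ => norm_nonneg _) (Finset.mem_univ i)
    rw [hB₀def]; linarith
  set B₁ : ℝ := max B₀ ‖u‖ with hB₁def
  have hB₁B₀ : B₀ ≤ B₁ := le_max_left _ _
  have hB₁u : ‖u‖ ≤ B₁ := le_max_right _ _
  -- the "radius" function
  set R : ℚ → ℝ := fun x => (q : ℝ) ^ ((x : ℚ) : ℝ) with hRdef
  have hRpos : ∀ x : ℚ, 0 < R x := fun x => Real.rpow_pos_of_pos hq0 _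
  have hRmono : ∀ x y : ℚ, x ≤ y → R x ≤ R y := by
    intro x y hxy
    exact Real.rpow_le_rpow_of_exponent_le hq1.le (by exact_mod_cast hxy)
  have hRsucc : ∀ x : ℚ, R x = (q : ℝ) * R (x - 1) := by
    intro x
    have hcast : ((x : ℚ) : ℝ) = ((x - 1 : ℚ) : ℝ) + 1 := by push_cast; ring
    rw [hRdef]
    simp only
    rw [hcast, Real.rpow_add hq0, Real.rpow_one]
    ring
  -- threshold
  obtain ⟨m, hm⟩ := pow_unbounded_of_one_lt ((q : ℝ) * B₁) hq1
  set x₀ : ℚ := (m : ℚ) with hx₀def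
  have hx₀ : (q : ℝ) * B₁ < R x₀ := by
    rw [hRdef]
    simp only
    rw [hx₀def]
    have : (((m : ℚ) : ℚ) : ℝ) = (m : ℝ) := by push_cast; ring
    rw [this, Real.rpow_natCast]
    exact hm
  -- the key recursion
  have key : ∀ x : ℚ, x₀ ≤ x → (zCoef q Λ u x : ℤ) = (q : ℤ) ^ r * zCoef q Λ u (x - 1) := by
    intro x hx
    have hRx₀x : R x₀ ≤ R x := hRmono _ _ hx
    have hB₁x1 : B₁ < R (x - 1) := by
      have h1 : (q : ℝ) * B₁ < (q : ℝ) * R (x - 1) := by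
        rw [← hRsucc]; exact lt_of_lt_of_le hx₀ hRx₀x
      exact lt_of_mul_lt_mul_left h1 hq0.le
    have hB₁x : B₁ < R x := lt_of_lt_of_le hB₁x1 (hRmono _ _ (by linarith))
    -- sphere description of zCoef
    have hzs : ∀ y : ℚ, (zCoef q Λ u y : ℤ)
        = (Nat.card {l : L | l - u ∈ Λ ∧ ‖l‖ ≤ R y} : ℤ)
          - (Nat.card {l : L | l - u ∈ Λ ∧ ‖l‖ < R y} : ℤ) := by
      intro y
      have hset : {l : L | l ≠ 0 ∧ l - u ∈ Λ ∧ logq q l = ((y : ℚ) : ℝ)}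
          = {l : L | l - u ∈ Λ ∧ ‖l‖ = R y} := by
        ext l
        constructor
        · rintro ⟨h0, hm', hlog⟩
          refine ⟨hm', ?_⟩
          have hnp : 0 < ‖l‖ := norm_pos_iff.mpr h0
          have := Real.rpow_logb hq0 (ne_of_gt hq1) hnp
          rw [show Real.logb (q : ℝ) ‖l‖ = logq q l from rfl, hlog] at this
          exact this.symm
        · rintro ⟨hm', hnorm⟩
          have hnp : 0 < ‖l‖ := hnorm ▸ hRpos y
          refine ⟨norm_pos_iff.mp hnp, hm', ?_⟩
          rw [show logq q l = Real.logb (q : ℝ) ‖l‖ from rfl, hnorm]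
          exact Real.logb_rpow hq0 (ne_of_gt hq1)
      have hsplit : {l : L | l - u ∈ Λ ∧ ‖l‖ ≤ R y}
          = {l : L | l - u ∈ Λ ∧ ‖l‖ < R y} ∪ {l : L | l - u ∈ Λ ∧ ‖l‖ = R y} := by
        ext l
        simp only [Set.mem_setOf_eq, Set.mem_union]
        constructor
        · rintro ⟨h1, h2⟩
          rcases lt_or_eq_of_le h2 with h | h
          · exact Or.inl ⟨h1, h⟩
          · exact Or.inr ⟨h1, h⟩
        · rintro (⟨h1, h2⟩ | ⟨h1, h2⟩)
          · exact ⟨h1, h2.le⟩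
          · exact ⟨h1, h2.le⟩
      have hfin := cosetBall_finite hna hΛ u (R y)
      have hfin1 : {l : L | l - u ∈ Λ ∧ ‖l‖ < R y}.Finite :=
        hfin.subset fun l ⟨h1, h2⟩ => ⟨h1, h2.le⟩
      have hfin2 : {l : L | l - u ∈ Λ ∧ ‖l‖ = R y}.Finite :=
        hfin.subset fun l ⟨h1, h2⟩ => ⟨h1, h2.le⟩
      have hdisj : Disjoint {l : L | l - u ∈ Λ ∧ ‖l‖ < R y} {l : L | l - u ∈ Λ ∧ ‖l‖ = R y} := by
        rw [Set.disjoint_left]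
        rintro l ⟨_, h2⟩ ⟨_, h4⟩
        exact absurd h4 (ne_of_lt h2)
      have hcard : Nat.card {l : L | l - u ∈ Λ ∧ ‖l‖ ≤ R y}
          = Nat.card {l : L | l - u ∈ Λ ∧ ‖l‖ < R y}
            + Nat.card {l : L | l - u ∈ Λ ∧ ‖l‖ = R y} := by
        rw [Nat.card_coe_set_eq, Nat.card_coe_set_eq, Nat.card_coe_set_eq, hsplit,
          Set.ncard_union_eq hdisj hfin1 hfin2]
      have hz : zCoef q Λ u y = Nat.card {l : L | l - u ∈ Λ ∧ ‖l‖ = R y} := by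
        rw [zCoef, hset]
      rw [hz, hcard]
      push_cast
      ring
    -- coset counts = lattice counts at levels x and x-1, both strict and non-strict
    have hcoset_le : ∀ y : ℚ, B₁ < R y →
        Nat.card {l : L | l - u ∈ Λ ∧ ‖l‖ ≤ R y} = Nat.card {l : L | l ∈ Λ ∧ ‖l‖ ≤ R y} :=
      fun y hy => card_coset_eq hna Λ u (fun t => t ≤ R y)
        (fun s t hst h => hst.trans h) (le_of_lt (lt_of_le_of_lt hB₁u hy))
    have hcoset_lt : ∀ y : ℚ, B₁ < R y →
        Nat.card {l : L | l - u ∈ Λ ∧ ‖l‖ < R y} = Nat.card {l : L | l ∈ Λ ∧ ‖l‖ < R y} :=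
      fun y hy => card_coset_eq hna Λ u (fun t => t < R y)
        (fun s t hst h => lt_of_le_of_lt hst h) (lt_of_le_of_lt hB₁u hy)
    -- the scaling identities at level x
    have hset_le : {l : L | l ∈ Λ ∧ (q : ℝ) * ‖l‖ ≤ R x} = {l : L | l ∈ Λ ∧ ‖l‖ ≤ R (x - 1)} := by
      ext l
      simp only [Set.mem_setOf_eq, and_congr_right_iff]
      intro _
      rw [hRsucc x]
      exact mul_le_mul_iff_right₀ hq0
    have hset_lt : {l : L | l ∈ Λ ∧ (q : ℝ) * ‖l‖ < R x} = {l : L | l ∈ Λ ∧ ‖l‖ < R (x - 1)} := by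
      ext l
      simp only [Set.mem_setOf_eq, and_congr_right_iff]
      intro _
      rw [hRsucc x]
      exact mul_lt_mul_iff_right₀ hq0
    have hscale_le : Nat.card {l : L | l ∈ Λ ∧ ‖l‖ ≤ R x}
        = Nat.card {l : L | l ∈ Λ ∧ ‖l‖ ≤ R (x - 1)} * q ^ r := by
      have h1 := card_ball_mul hq hna hA hb hsp hB₀pos.le hbB (fun t => t ≤ R x)
        (fun s t hst h => hst.trans h) (lt_of_le_of_lt hB₁B₀ hB₁x).le
      rw [h1, hset_le]
    have hscale_lt : Nat.card {l : L | l ∈ Λ ∧ ‖l‖ < R x}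
        = Nat.card {l : L | l ∈ Λ ∧ ‖l‖ < R (x - 1)} * q ^ r := by
      have h1 := card_ball_mul hq hna hA hb hsp hB₀pos.le hbB (fun t => t < R x)
        (fun s t hst h => lt_of_le_of_lt hst h) (lt_of_le_of_lt hB₁B₀ hB₁x)
      rw [h1, hset_lt]
    -- put everything together
    rw [hzs x, hzs (x - 1), hcoset_le x hB₁x, hcoset_lt x hB₁x,
      hcoset_le (x - 1) hB₁x1, hcoset_lt (x - 1) hB₁x1, hscale_le, hscale_lt]
    push_cast
    ring
  -- finiteness of the support below any bound
  have hsupp : ∀ c : ℚ, {x : ℚ | zCoef q Λ u x ≠ 0 ∧ x ≤ c}.Finite := by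
    intro c
    set f : ℚ → L := fun x =>
      if h : {l : L | l ≠ 0 ∧ l - u ∈ Λ ∧ logq q l = ((x : ℚ) : ℝ)}.Nonempty then h.choose else 0
      with hfdef
    have hfspec : ∀ x : ℚ, zCoef q Λ u x ≠ 0 →
        f x ≠ 0 ∧ f x - u ∈ Λ ∧ logq q (f x) = ((x : ℚ) : ℝ) := by
      intro x hx
      have hne : {l : L | l ≠ 0 ∧ l - u ∈ Λ ∧ logq q l = ((x : ℚ) : ℝ)}.Nonempty := by
        rw [← Set.nonempty_coe_sort]
        exact (Nat.card_ne_zero.mp hx).1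
      rw [hfdef]
      simp only [hne, dif_pos]
      exact hne.choose_spec
    have hfnorm : ∀ x : ℚ, zCoef q Λ u x ≠ 0 → ‖f x‖ = R x := by
      intro x hx
      obtain ⟨h0, _, hlog⟩ := hfspec x hx
      have hnp : 0 < ‖f x‖ := norm_pos_iff.mpr h0
      have := Real.rpow_logb hq0 (ne_of_gt hq1) hnp
      rw [show Real.logb (q : ℝ) ‖f x‖ = logq q (f x) from rfl, hlog] at this
      exact this.symm
    apply Set.Finite.of_finite_image (f := f)
    · apply (cosetBall_finite hna hΛ u (R c)).subset
      rintro l ⟨x, ⟨hx0, hxc⟩, rfl⟩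
      exact ⟨(hfspec x hx0).2.1, (hfnorm x hx0) ▸ hRmono x c hxc⟩
    · intro a ha a' ha' hfa
      simp only [Set.mem_setOf_eq] at ha ha'
      have h1 : R a = R a' := by rw [← hfnorm a ha.1, ← hfnorm a' ha'.1, hfa]
      have h2 : ((a : ℚ) : ℝ) = ((a' : ℚ) : ℝ) := by
        have := congrArg (Real.logb (q : ℝ)) h1
        rwa [hRdef, Real.logb_rpow hq0 (ne_of_gt hq1),
          Real.logb_rpow hq0 (ne_of_gt hq1)] at this
      exact_mod_cast h2
  have hF : {x : ℚ | zCoef q Λ u x ≠ 0 ∧ x ≤ x₀}.Finite := hsupp x₀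
  set n : ℕ := ∏ x ∈ hF.toFinset, x.den with hndef
  have hn : 0 < n := Finset.prod_pos fun x _ => x.pos
  -- descent: every support element is a natural shift of a small support element
  have hdesc : ∀ m : ℕ, ∀ x : ℚ, x ≤ x₀ + m → zCoef q Λ u x ≠ 0 →
      ∃ f ∈ hF.toFinset, ∃ j : ℕ, x = f + j := by
    intro m
    induction m with
    | zero =>
      intro x hx h
      refine ⟨x, hF.mem_toFinset.mpr ⟨h, by simpa using hx⟩, 0, by simp⟩
    | succ m ih =>
      intro x hx h
      by_cases hc : x ≤ x₀
      · exact ⟨x, hF.mem_toFinset.mpr ⟨h, hc⟩, 0, by simp⟩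
      · push_neg at hc
        have hkey := key x hc.le
        have h' : zCoef q Λ u (x - 1) ≠ 0 := by
          intro h0
          rw [h0] at hkey
          simp only [Nat.cast_zero, mul_zero, Nat.cast_eq_zero] at hkey
          exact h (by exact_mod_cast hkey)
        obtain ⟨f, hf, j, hj⟩ := ih (x - 1) (by push_cast at hx ⊢; linarith) h'
        exact ⟨f, hf, j + 1, by push_cast at hj ⊢; linarith⟩
  refine ⟨n, hn, ?_, ?_⟩
  · -- support in (1/n)·ℤ
    intro x hx
    have hxle : x ≤ x₀ + (⌈x - x₀⌉.toNat : ℕ) := by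
      have h1 : x - x₀ ≤ (⌈x - x₀⌉ : ℚ) := Int.le_ceil _
      have h2 : (⌈x - x₀⌉ : ℚ) ≤ (⌈x - x₀⌉.toNat : ℚ) := by
        exact_mod_cast Int.self_le_toNat _
      linarith
    obtain ⟨f, hf, j, hj⟩ := hdesc _ x hxle hx
    have hdvd : f.den ∣ n := Finset.dvd_prod_of_mem _ hf
    obtain ⟨t, ht⟩ := hdvd
    refine ⟨f.num * t + j * n, ?_⟩
    have hn0 : (n : ℚ) ≠ 0 := by exact_mod_cast hn.ne'
    have hden0 : (f.den : ℚ) ≠ 0 := by exact_mod_cast f.den_nz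
    have hfnum : (f.num : ℚ) = f * f.den := by
      rw [← div_eq_iff hden0]
      exact Rat.num_div_den f
    have hnt : (n : ℚ) = (f.den : ℚ) * (t : ℚ) := by exact_mod_cast ht
    rw [hj, eq_div_iff hn0]
    push_cast
    rw [hfnum, hnt]
    ring
  · -- finiteness of the set where the recursion fails
    apply ((hsupp x₀).union ((hsupp x₀).image (· + 1))).subset
    intro x hx
    simp only [Set.mem_setOf_eq] at hx
    by_cases hc : x₀ ≤ x
    · exact absurd (by rw [key x hc]; ring) hx
    · push_neg at hc
      by_cases h1 : zCoef q Λ u x ≠ 0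
      · exact Or.inl ⟨h1, hc.le⟩
      · push_neg at h1
        right
        refine ⟨x - 1, ⟨?_, by linarith⟩, by ring⟩
        intro h2
        apply hx
        rw [h1, h2]
        ring
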